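/- Let A and B be finite groups with a left A-action and a right B-action on a set X such that a(xb) = (ax)b, and fix x ∈ X. Then the cardinality of the intersection of orbits Ω(x) = (Ax) ∩ (xB) divides the index of A_x in its normalizer N_A(A_x), i.e. |Ω(x)| divides |N_A(A_x)/A_x|, and likewise |Ω(x)| divides |N_B(B_x)/B_x|. (Corollary 3.2, first part.) -/

import Mathlib

open MulAction Subgroup

section Aux

variable {A B X : Type*} [Group A] [Group B]
    [MulAction A X] [MulAction B X] [SMulCommClass A B X]

/-- The subgroup of `A` consisting of elements moving `x` inside its `B`-orbit. -/
def interK (A : Type*) (B : Type*) {X : Type*} [Group A] [Group B] [MulAction A X]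
    [MulAction B X] [SMulCommClass A B X] (x : X) : Subgroup A where
  carrier := {a : A | a • x ∈ orbit B x}
  one_mem' := by simpa using mem_orbit_self x
  mul_mem' := by
    rintro a a' ⟨b, hb⟩ ⟨b', hb'⟩
    refine ⟨b' * b, ?_⟩
    simp only at hb hb' ⊢
    rw [mul_smul, mul_smul, hb, ← smul_comm a b' x, hb']
  inv_mem' := by
    rintro a ⟨b, hb⟩
    refine ⟨b⁻¹, ?_⟩
    simp only at hb ⊢
    calc b⁻¹ • x = b⁻¹ • a⁻¹ • (a • x) := by rw [inv_smul_smul]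
      _ = b⁻¹ • a⁻¹ • (b • x) := by rw [hb]
      _ = a⁻¹ • b⁻¹ • (b • x) := (smul_comm a⁻¹ b⁻¹ (b • x)).symm
      _ = a⁻¹ • x := by rw [inv_smul_smul]

lemma stabilizer_smul_B (b : B) (x : X) :
    stabilizer A (b • x) = stabilizer A x := by
  ext a
  simp only [mem_stabilizer_iff, smul_comm a b x]
  exact smul_left_cancel_iff b

lemma interK_le_normalizer (x : X) :
    interK A B x ≤ (Subgroup.normalizer (stabilizer A x : Set A)) := by
  rintro a ⟨b, hb⟩
  simp only at hb
  rw [mem_normalizer_iff]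
  intro h
  have key : stabilizer A (a • x) = stabilizer A x := by
    rw [← hb]; exact stabilizer_smul_B b x
  constructor
  · intro hh
    have : (a * h * a⁻¹) • (a • x) = a • x := by
      simp only [mul_smul, inv_smul_smul]
      rw [mem_stabilizer_iff.mp hh]
    rwa [← key, mem_stabilizer_iff]
  · intro hh
    have := mem_stabilizer_iff.mp (key ▸ hh)
    simp only [mul_smul, inv_smul_smul] at this
    exact mem_stabilizer_iff.mpr (smul_left_cancel a this)

lemma orbit_inter_eq (x : X) :
    orbit A x ∩ orbit B x = orbit (interK A B x) x := by
  ext y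
  constructor
  · rintro ⟨⟨a, rfl⟩, hy⟩
    exact ⟨⟨a, hy⟩, rfl⟩
  · rintro ⟨⟨a, ha⟩, rfl⟩
    exact ⟨⟨a, rfl⟩, ha⟩

lemma aux_dvd [Finite A] (x : X) :
    Nat.card ↥(orbit A x ∩ orbit B x) ∣
      Nat.card (↥(Subgroup.normalizer (stabilizer A x : Set A)) ⧸
        (stabilizer A x).subgroupOf (Subgroup.normalizer (stabilizer A x : Set A))) := by
  classical
  set K := interK A B x with hK
  set N := (Subgroup.normalizer (stabilizer A x : Set A)) with hN
  have hKN : K ≤ N := interK_le_normalizer x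
  have h1 : Nat.card ↥(orbit A x ∩ orbit B x)
      = Nat.card (K ⧸ stabilizer K x) := by
    rw [orbit_inter_eq]
    exact Nat.card_congr (orbitEquivQuotientStabilizer K x)
  have hstab : stabilizer K x = (stabilizer A x).subgroupOf K := by
    ext k
    simp [mem_stabilizer_iff, mem_subgroupOf, Subgroup.smul_def]
  rw [h1, hstab]
  haveI : ((stabilizer A x).subgroupOf K).Normal := by
    constructor
    intro n hn k
    rw [mem_subgroupOf] at *
    have hkN : (k : A) ∈ N := hKN k.2
    rw [hN, mem_normalizer_iff] at hkN
    exact (hkN n).mp hn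
  have hcond : (stabilizer A x).subgroupOf K ≤
      ((stabilizer A x).subgroupOf N).comap (inclusion hKN) := by
    intro k hk
    rw [mem_subgroupOf] at hk
    simpa [mem_comap, mem_subgroupOf] using hk
  set f := QuotientGroup.map ((stabilizer A x).subgroupOf K)
    ((stabilizer A x).subgroupOf N) (inclusion hKN) hcond with hf
  have hinj : Function.Injective f := by
    intro y z
    induction y using QuotientGroup.induction_on with
    | H y =>
    induction z using QuotientGroup.induction_on with
    | H z =>
    intro h
    simp only [hf, QuotientGroup.map_mk] at h
    rw [QuotientGroup.eq] at h ⊢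
    rw [mem_subgroupOf] at h ⊢
    simpa using h
  have hcard : Nat.card (K ⧸ (stabilizer A x).subgroupOf K) = Nat.card f.range :=
    Nat.card_congr (Equiv.ofInjective f hinj)
  rw [hcard]
  exact Subgroup.card_subgroup_dvd_card f.range

end Aux

/-- **Corollary 3.2 (first part).** Let `A`, `B` be finite groups acting on a set `X` on
the left and right respectively, with commuting actions (the right `B`-action encoded as
a left `Bᵐᵒᵖ`-action).  For `x ∈ X`, the cardinality of the intersection of orbits
`Ω(x) = (Ax) ∩ (xB)` divides `|N_A(Aₓ)/Aₓ|`, the index of the stabilizer `Aₓ` in its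
normalizer, and likewise divides `|N_B(Bₓ)/Bₓ|`. -/
theorem intersection_orbit_card_dvd_normalizer {A B X : Type*} [Group A] [Group B]
    [Finite A] [Finite B]
    [MulAction A X] [MulAction Bᵐᵒᵖ X] [SMulCommClass A Bᵐᵒᵖ X] (x : X) :
    Nat.card ↥(MulAction.orbit A x ∩ MulAction.orbit Bᵐᵒᵖ x) ∣
      Nat.card (↥(Subgroup.normalizer (MulAction.stabilizer A x : Set A)) ⧸
        (MulAction.stabilizer A x).subgroupOf (Subgroup.normalizer (MulAction.stabilizer A x : Set A))) ∧
    Nat.card ↥(MulAction.orbit A x ∩ MulAction.orbit Bᵐᵒᵖ x) ∣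
      Nat.card (↥(Subgroup.normalizer (MulAction.stabilizer Bᵐᵒᵖ x : Set Bᵐᵒᵖ)) ⧸
        (MulAction.stabilizer Bᵐᵒᵖ x).subgroupOf (Subgroup.normalizer (MulAction.stabilizer Bᵐᵒᵖ x : Set Bᵐᵒᵖ))) := by
  haveI := SMulCommClass.symm A Bᵐᵒᵖ X
  haveI : Finite Bᵐᵒᵖ := Finite.of_equiv B MulOpposite.opEquiv
  refine ⟨aux_dvd x, ?_⟩
  rw [Set.inter_comm]
  exact aux_dvd x
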